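/- arXiv:1512.03641 — 6 statements merged into one kernel-verified Lean document; each statement's English description precedes it below -/
import Mathlib

section
/- Let ρ : L^∞ → ℝ be normalized and cash-subadditive, and suppose ρ admits a dual representation ρ(X) = sup_{X' ∈ P} { E[X'·(−X)] − ρ*(X') } over a set P ⊆ L¹₊ of nonnegative integrable random variables, where ρ* is the convex conjugate of ρ. Then every X' ∈ P with ρ*(X') < +∞ satisfies E[X'] ≤ 1. -/
open MeasureTheory

/-- If a normalized cash-subadditive risk measure `ρ` admits the dual
representation `ρ(X) = sup_{X' ∈ Pset} { E[X'·(−X)] − ρ*(X') }` over a set `Pset` of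
nonnegative integrable random variables, where `ρ*` is the Fenchel–Moreau
conjugate of `ρ` (computed over L^∞), then every `X' ∈ Pset` with
`ρ*(X') < +∞` satisfies `E[X'] ≤ 1`. -/
theorem stmt3 {Ω : Type*} [MeasurableSpace Ω] (μ : Measure Ω) [IsProbabilityMeasure μ]
    (ρ : (Ω → ℝ) → ℝ)
    (hnorm : ρ 0 = 0)
    (hcsa : ∀ (X : Ω → ℝ) (m : ℝ), 0 ≤ m → ρ X - m ≤ ρ (fun ω => X ω + m))
    (Pset : Set (Ω → ℝ))
    (hPset : ∀ X' ∈ Pset, (∀ᵐ ω ∂μ, 0 ≤ X' ω) ∧ Integrable X' μ)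
    (ρstar : (Ω → ℝ) → EReal)
    (hstar : ∀ X' : Ω → ℝ, ρstar X' =
      ⨆ X : {X : Ω → ℝ // Measurable X ∧ ∃ C, ∀ ω, |X ω| ≤ C},
        ((∫ ω, X' ω * (-(X.1 ω)) ∂μ - ρ X.1 : ℝ) : EReal))
    (hrep : ∀ X : Ω → ℝ, Measurable X → (∃ C, ∀ ω, |X ω| ≤ C) →
      (ρ X : EReal) = ⨆ X' : Pset, (((∫ ω, X'.1 ω * (-(X ω)) ∂μ : ℝ) : EReal) - ρstar X'.1)) :
    ∀ X' ∈ Pset, ρstar X' < ⊤ → ∫ ω, X' ω ∂μ ≤ 1 := by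
  intro X' hX' htop
  by_contra hgt
  push_neg at hgt
  set I := ∫ ω, X' ω ∂μ with hI
  have hd : 0 < I - 1 := by linarith
  -- key: for all m ≥ 0, ((m * I - m : ℝ) : EReal) ≤ ρstar X'
  have key : ∀ m : ℝ, 0 ≤ m → ((m * I - m : ℝ) : EReal) ≤ ρstar X' := by
    intro m hm
    have hmem : Measurable (fun _ : Ω => -m) ∧ ∃ C, ∀ ω : Ω, |(-m : ℝ)| ≤ C :=
      ⟨measurable_const, ⟨m, fun _ => by rw [abs_neg, abs_of_nonneg hm]⟩⟩
    have hρ : ρ (fun _ : Ω => -m) ≤ m := by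
      have := hcsa (fun _ : Ω => -m) m hm
      simp only [neg_add_cancel] at this
      have h0 : ρ (fun _ : Ω => (0:ℝ)) = 0 := hnorm
      linarith [this, h0]
    have hint : ∫ ω, X' ω * (-(-m)) ∂μ = m * I := by
      simp only [neg_neg]
      rw [MeasureTheory.integral_mul_const]
      ring
    have hle : ((∫ ω, X' ω * (-((fun _ : Ω => -m) ω)) ∂μ - ρ (fun _ : Ω => -m) : ℝ) : EReal)
        ≤ ρstar X' := by
      rw [hstar X']
      exact le_iSup (fun X : {X : Ω → ℝ // Measurable X ∧ ∃ C, ∀ ω, |X ω| ≤ C} =>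
        ((∫ ω, X' ω * (-(X.1 ω)) ∂μ - ρ X.1 : ℝ) : EReal)) ⟨fun _ => -m, hmem⟩
    refine le_trans ?_ hle
    apply EReal.coe_le_coe_iff.mpr
    simp only [hint]
    linarith [hρ]
  have h0 : (0 : EReal) ≤ ρstar X' := by
    have := key 0 le_rfl
    simpa using this
  have hne : ρstar X' ≠ ⊤ := ne_of_lt htop
  have hnb : ρstar X' ≠ ⊥ := by
    intro hb
    rw [hb] at h0
    exact absurd h0 (by simp)
  set r := (ρstar X').toReal with hr
  have hcoe : ((r : ℝ) : EReal) = ρstar X' := EReal.coe_toReal hne hnb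
  have hbound : ∀ m : ℝ, 0 ≤ m → m * I - m ≤ r := by
    intro m hm
    have := key m hm
    rw [← hcoe] at this
    exact_mod_cast this
  have hr0 : (0:ℝ) ≤ r := by have := hbound 0 le_rfl; linarith
  have hm0 : (0:ℝ) ≤ (r + 1) / (I - 1) := div_nonneg (by linarith) (le_of_lt hd)
  have := hbound ((r + 1) / (I - 1)) hm0
  have heq : (r + 1) / (I - 1) * I - (r + 1) / (I - 1) = r + 1 := by
    field_simp
  rw [heq] at this
  linarith
end

section
/- Let Q be a probability measure absolutely continuous with respect to P on (Ω, F_T), let a ∈ [0,1], and set μ = a·Q (a subprobability). Let Z_t = E_P[dQ/dP | F_t], N = {Z_t = 0}, and define D_t = a·Z_t and the probability measure Q̃ by Q̃(B) = ∫_{B∖N} Z_t⁻¹ dQ + P(B ∩ N) for B ∈ F_T. Then: (i) Q̃ is a probability measure with Q̃ = P on F_t; (ii) μ(C) = ∫_C D_t dQ̃ for every C ∈ F_T, i.e., E_μ[X] = E_P[D_t · E_{Q̃}[X | F_t]] for all X ∈ L^∞(F_T). -/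
open MeasureTheory
open scoped ENNReal

/-- Decomposition of a subprobability `μ = a·Q` (with `Q ≪ P`) as `μ = D_t·Q̃`,
where `Z_t = E_P[dQ/dP|F_t]`, `N = {Z_t = 0}`, `D_t = a·Z_t` and
`Q̃(B) = ∫_{B∖N} Z_t⁻¹ dQ + P(B ∩ N)`. Then `Q̃` is a probability measure
agreeing with `P` on `F_t`, and `μ(C) = ∫_C D_t dQ̃` for all `C ∈ F_T`, i.e.
`E_μ[X] = E_P[D_t · E_{Q̃}[X|F_t]]` for all `X ∈ L^∞(F_T)`. -/
theorem stmt7 {Ω : Type*} {m0 mT : MeasurableSpace Ω} (hm0 : m0 ≤ mT)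
    (P Q : @Measure Ω mT) [IsProbabilityMeasure P] [IsProbabilityMeasure Q]
    (hQP : Q ≪ P)
    (a : ℝ) (ha : a ∈ Set.Icc (0:ℝ) 1)
    (Z : Ω → ℝ) (hZ : Z = P[fun ω => (Q.rnDeriv P ω).toReal|m0])
    (N : Set Ω) (hN : N = {ω | Z ω = 0})
    (D : Ω → ℝ) (hD : D = fun ω => a * Z ω)
    (Qt : @Measure Ω mT)
    (hQt : ∀ B : Set Ω, MeasurableSet[mT] B →
      Qt B = ∫⁻ ω in B \ N, ENNReal.ofReal (Z ω)⁻¹ ∂Q + P (B ∩ N)) :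
    -- (i) Q̃ is a probability measure reducing to P on F_t
    (IsProbabilityMeasure Qt ∧ ∀ B : Set Ω, MeasurableSet[m0] B → Qt B = P B) ∧
    -- (ii) μ = D_t · Q̃ on F_T
    (∀ C : Set Ω, MeasurableSet[mT] C →
      ENNReal.ofReal a * Q C = ∫⁻ ω in C, ENNReal.ofReal (D ω) ∂Qt) ∧
    -- equivalently, E_μ[X] = E_P[D_t E_{Q̃}[X|F_t]] for bounded X
    (∀ X : Ω → ℝ, Measurable[mT] X → (∃ C, ∀ ω, |X ω| ≤ C) →
      a * ∫ ω, X ω ∂Q = ∫ ω, D ω * (Qt[X|m0]) ω ∂P) := by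
  set f : Ω → ℝ := fun ω => (Q.rnDeriv P ω).toReal with hf
  have hf_int : Integrable f P := Measure.integrable_toReal_rnDeriv
  have hZsm : StronglyMeasurable[m0] Z := hZ ▸ stronglyMeasurable_condExp
  have hZm : Measurable[m0] Z := hZsm.measurable
  have hZmT : Measurable[mT] Z := hZm.mono hm0 le_rfl
  have hNmeas0 : MeasurableSet[m0] N := by
    rw [hN]; exact hZm (measurableSet_singleton 0)
  have hNmeas : MeasurableSet[mT] N := hm0 _ hNmeas0
  have hZ0 : 0 ≤ᵐ[P] Z := hZ ▸ condExp_nonneg (Filter.Eventually.of_forall fun ω => ENNReal.toReal_nonneg)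
  have hZint : Integrable Z P := hZ ▸ integrable_condExp
  -- ∫⁻_B ofReal Z dP = Q B for B ∈ m0
  have key0 : ∀ B : Set Ω, MeasurableSet[m0] B →
      ∫⁻ ω in B, ENNReal.ofReal (Z ω) ∂P = Q B := by
    intro B hB
    have h1 : ∫ ω in B, Z ω ∂P = ∫ ω in B, f ω ∂P := by
      rw [hZ]; exact setIntegral_condExp hm0 hf_int hB
    have h2 : ∫ ω in B, f ω ∂P = (Q B).toReal :=
      Measure.setIntegral_toReal_rnDeriv hQP B
    rw [← ofReal_integral_eq_lintegral_ofReal hZint.integrableOn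
      (ae_restrict_of_ae hZ0), h1, h2, ENNReal.ofReal_toReal (measure_ne_top _ _)]
  have hZnm : Measurable[m0] fun ω => ENNReal.ofReal (Z ω) := ENNReal.measurable_ofReal.comp hZm
  haveI : IsFiniteMeasure (P.trim hm0) := isFiniteMeasure_trim hm0
  haveI : IsFiniteMeasure (Q.trim hm0) := isFiniteMeasure_trim hm0
  -- trim of Q has density ofReal Z wrt trim of P
  have htrim : Q.trim hm0 = (P.trim hm0).withDensity (fun ω => ENNReal.ofReal (Z ω)) := by
    refine @Measure.ext Ω m0 _ _ fun B hB => ?_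
    rw [withDensity_apply _ hB, trim_measurableSet_eq hm0 hB]
    have h3 : ∫⁻ ω in B, ENNReal.ofReal (Z ω) ∂(P.trim hm0)
        = ∫⁻ ω in B, ENNReal.ofReal (Z ω) ∂P :=
      calc ∫⁻ ω in B, ENNReal.ofReal (Z ω) ∂(P.trim hm0)
          = ∫⁻ ω, B.indicator (fun ω => ENNReal.ofReal (Z ω)) ω ∂(P.trim hm0) :=
            (lintegral_indicator hB _).symm
        _ = ∫⁻ ω, B.indicator (fun ω => ENNReal.ofReal (Z ω)) ω ∂P :=
            lintegral_trim hm0 (hZnm.indicator hB)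
        _ = ∫⁻ ω in B, ENNReal.ofReal (Z ω) ∂P := lintegral_indicator (hm0 B hB) _
    rw [h3, key0 B hB]
  -- lintegral of m0-measurable functions wrt Q
  have keyL : ∀ g : Ω → ℝ≥0∞, Measurable[m0] g →
      ∫⁻ ω, g ω ∂Q = ∫⁻ ω, g ω * ENNReal.ofReal (Z ω) ∂P := by
    intro g hg
    rw [← lintegral_trim hm0 hg, htrim,
      lintegral_withDensity_eq_lintegral_mul _ hZnm hg]
    simp only [Pi.mul_apply]
    rw [lintegral_trim hm0 (f := fun ω => ENNReal.ofReal (Z ω) * g ω) (hZnm.mul hg)]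
    exact lintegral_congr fun ω => mul_comm _ _
  have keyLs : ∀ (g : Ω → ℝ≥0∞), Measurable[m0] g → ∀ S : Set Ω, MeasurableSet[m0] S →
      ∫⁻ ω in S, g ω ∂Q = ∫⁻ ω in S, g ω * ENNReal.ofReal (Z ω) ∂P := by
    intro g hg S hS
    rw [← lintegral_indicator (hm0 S hS) _, ← lintegral_indicator (hm0 S hS)
      (fun ω => g ω * ENNReal.ofReal (Z ω)), keyL _ (hg.indicator hS)]
    refine lintegral_congr fun ω => ?_
    by_cases h : ω ∈ S <;> simp [h]
  have hZpos : ∀ᵐ ω ∂P, ω ∉ N → 0 < Z ω := by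
    filter_upwards [hZ0] with ω h1 h2
    refine lt_of_le_of_ne h1 fun h => h2 ?_
    rw [hN]; exact Set.mem_setOf.mpr h.symm
  have keyA : ∀ B : Set Ω, MeasurableSet[m0] B →
      ∫⁻ ω in B \ N, ENNReal.ofReal (Z ω)⁻¹ ∂Q = P (B \ N) := by
    intro B hB
    have hBN : MeasurableSet[m0] (B \ N) := hB.diff hNmeas0
    have hinvm : Measurable[m0] fun ω => ENNReal.ofReal (Z ω)⁻¹ :=
      ENNReal.measurable_ofReal.comp hZm.inv
    rw [keyLs _ hinvm _ hBN,
      setLIntegral_congr_fun_ae (hm0 _ hBN)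
        (g := fun _ => (1 : ℝ≥0∞)) ?_, setLIntegral_one]
    filter_upwards [hZpos] with ω h1 h2
    have hpos : 0 < Z ω := h1 h2.2
    rw [← ENNReal.ofReal_mul (inv_nonneg.mpr hpos.le), inv_mul_cancel₀ hpos.ne',
      ENNReal.ofReal_one]
  have hQtP : ∀ B : Set Ω, MeasurableSet[m0] B → Qt B = P B := by
    intro B hB
    rw [hQt B (hm0 B hB), keyA B hB, measure_diff_add_inter B hNmeas]
  have hQtprob : IsProbabilityMeasure Qt :=
    ⟨by rw [hQtP Set.univ MeasurableSet.univ]; exact measure_univ⟩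
  have hQN : Q N = 0 := by
    rw [← key0 N hNmeas0, setLIntegral_congr_fun_ae (hm0 N hNmeas0)
      (g := fun _ => (0:ℝ≥0∞)) ?_, lintegral_zero]
    refine Filter.Eventually.of_forall fun ω hω => ?_
    rw [hN] at hω
    simp [Set.mem_setOf_eq.mp hω]
  have hinvmT : Measurable[mT] fun ω => ENNReal.ofReal (Z ω)⁻¹ :=
    ENNReal.measurable_ofReal.comp hZmT.inv
  have hQtm : Qt = (Q.restrict Nᶜ).withDensity (fun ω => ENNReal.ofReal (Z ω)⁻¹)
      + P.restrict N := by
    refine Measure.ext fun B hB => ?_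
    rw [hQt B hB, Measure.add_apply, withDensity_apply _ hB,
      Measure.restrict_restrict hB, Measure.restrict_apply hB, Set.diff_eq]
  have hmain : ∀ c : ℝ, 0 ≤ c → ∀ C : Set Ω, MeasurableSet[mT] C →
      ∫⁻ ω in C, ENNReal.ofReal (c * Z ω) ∂Qt = ENNReal.ofReal c * Q C := by
    intro c hc C hC
    have hcm : Measurable[mT] fun ω => ENNReal.ofReal (c * Z ω) :=
      ENNReal.measurable_ofReal.comp (hZmT.const_mul c)
    rw [hQtm, Measure.restrict_add, lintegral_add_measure]
    have h2 : ∫⁻ ω, ENNReal.ofReal (c * Z ω) ∂((P.restrict N).restrict C) = 0 := by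
      rw [Measure.restrict_restrict hC, setLIntegral_congr_fun_ae (hC.inter hNmeas)
        (g := fun _ => (0:ℝ≥0∞)) ?_, lintegral_zero]
      refine Filter.Eventually.of_forall fun ω hω => ?_
      have : Z ω = 0 := by have := hω.2; rw [hN] at this; exact this
      simp [this]
    have h1 : ∫⁻ ω, ENNReal.ofReal (c * Z ω)
        ∂(((Q.restrict Nᶜ).withDensity (fun ω => ENNReal.ofReal (Z ω)⁻¹)).restrict C)
        = ENNReal.ofReal c * Q C := by
      rw [restrict_withDensity hC, Measure.restrict_restrict hC,
        lintegral_withDensity_eq_lintegral_mul _ hinvmT hcm]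
      simp only [Pi.mul_apply]
      have hae : ∀ᵐ ω ∂(Q.restrict (C ∩ Nᶜ)),
          ENNReal.ofReal (Z ω)⁻¹ * ENNReal.ofReal (c * Z ω) = ENNReal.ofReal c := by
        filter_upwards [ae_restrict_mem (hC.inter hNmeas.compl),
          ae_restrict_of_ae (hZpos.filter_mono hQP.ae_le)] with ω hω h1
        have hpos : 0 < Z ω := h1 hω.2
        rw [ENNReal.ofReal_mul hc, mul_comm (ENNReal.ofReal c) _, ← mul_assoc,
          ← ENNReal.ofReal_mul (inv_nonneg.mpr hpos.le), inv_mul_cancel₀ hpos.ne',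
          ENNReal.ofReal_one, one_mul]
      rw [lintegral_congr_ae hae, lintegral_const, Measure.restrict_apply_univ,
        ← Set.diff_eq, measure_diff_null hQN]
    rw [h1, h2, add_zero]
  have hQwd : Q = Qt.withDensity (fun ω => ENNReal.ofReal (Z ω)) := by
    refine Measure.ext fun B hB => ?_
    rw [withDensity_apply _ hB]
    have := hmain 1 zero_le_one B hB
    simpa using this.symm
  refine ⟨⟨hQtprob, hQtP⟩, fun C hC => by rw [hD]; exact (hmain a ha.1 C hC).symm, ?_⟩
  -- part (iii)
  intro X hX hXb
  obtain ⟨Cb, hCb⟩ := hXb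
  haveI := hQtprob
  haveI : IsFiniteMeasure (Qt.trim hm0) := isFiniteMeasure_trim hm0
  have hXint : Integrable X Qt := by
    refine Integrable.mono' (integrable_const Cb) hX.aestronglyMeasurable
      (Filter.Eventually.of_forall fun ω => ?_)
    rw [Real.norm_eq_abs]; exact hCb ω
  set Y : Ω → ℝ := Qt[X|m0] with hY
  have hYsm : StronglyMeasurable[m0] Y := stronglyMeasurable_condExp
  have hYm : Measurable[m0] Y := hYsm.measurable
  -- Z ≥ 0 Qt-a.e.
  have hZ0' : ∀ᵐ ω ∂P, 0 ≤ Z ω := hZ0.mono fun ω h => by simpa using h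
  have hsetZ : MeasurableSet[m0] {ω | ¬ 0 ≤ Z ω} := by
    have : {ω | ¬ 0 ≤ Z ω} = Z ⁻¹' Set.Iio 0 := by ext ω; simp [not_le]
    rw [this]; exact hZm measurableSet_Iio
  have hZ0Qt : ∀ᵐ ω ∂Qt, 0 ≤ Z ω :=
    ae_iff.mpr (by rw [hQtP _ hsetZ]; exact ae_iff.mp hZ0')
  -- Y is bounded Qt-a.e. and hence P-a.e.
  have hYb : ∀ᵐ ω ∂Qt, |Y ω| ≤ (Cb.toNNReal : ℝ) :=
    ae_bdd_condExp_of_ae_bdd (Filter.Eventually.of_forall fun ω =>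
      (hCb ω).trans (Real.le_coe_toNNReal Cb))
  have hsetY : MeasurableSet[m0] {ω | ¬ |Y ω| ≤ (Cb.toNNReal : ℝ)} :=
    hYm ((measurable_abs measurableSet_Iic).compl)
  have hYbP : ∀ᵐ ω ∂P, |Y ω| ≤ (Cb.toNNReal : ℝ) :=
    ae_iff.mpr (by rw [← hQtP _ hsetY]; exact ae_iff.mp hYb)
  -- Integrability of Y * f under P
  have hYf_int : Integrable (Y * f) P := by
    refine Integrable.mono' (hf_int.const_mul (Cb.toNNReal : ℝ))
      (((hYm.mono hm0 le_rfl).mul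
        (Q.measurable_rnDeriv P).ennreal_toReal).aestronglyMeasurable) ?_
    filter_upwards [hYbP] with ω h
    rw [Pi.mul_apply, Real.norm_eq_abs, abs_mul, abs_of_nonneg (ENNReal.toReal_nonneg :
      (0:ℝ) ≤ f ω)]
    exact mul_le_mul_of_nonneg_right h ENNReal.toReal_nonneg
  -- Step A : ∫ Z·Y dP = ∫ Y dQ
  have hA : ∫ ω, Z ω * Y ω ∂P = ∫ ω, Y ω ∂Q := by
    have h1 : ∫ ω, Y ω ∂Q = ∫ ω, f ω • Y ω ∂P := (integral_rnDeriv_smul hQP).symm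
    have h4 : P[Y * f|m0] =ᵐ[P] Y * P[f|m0] := condExp_mul_of_stronglyMeasurable_left hYsm hYf_int hf_int
    have h3 : ∫ ω, (Y * f) ω ∂P = ∫ ω, (P[Y * f|m0]) ω ∂P := (integral_condExp hm0).symm
    have h5 : ∫ ω, (P[Y * f|m0]) ω ∂P = ∫ ω, Z ω * Y ω ∂P := by
      refine integral_congr_ae ?_
      filter_upwards [h4] with ω h
      rw [h, Pi.mul_apply, ← hZ, mul_comm]
    rw [h1, ← h5, ← h3]
    refine integral_congr_ae (Filter.Eventually.of_forall fun ω => ?_)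
    simp [smul_eq_mul, mul_comm]
  -- the change-of-measure identity for Bochner integrals
  have hf2m : Measurable[mT] fun ω => (Z ω).toNNReal := hZmT.real_toNNReal
  have hsmul : ∀ g : Ω → ℝ, ∫ ω, g ω ∂Q = ∫ ω, Z ω * g ω ∂Qt := by
    intro g
    have hQwd' : Q = Qt.withDensity (fun ω => ((Z ω).toNNReal : ℝ≥0∞)) := hQwd
    rw [hQwd', integral_withDensity_eq_integral_smul hf2m g]
    refine integral_congr_ae ?_
    filter_upwards [hZ0Qt] with ω h
    rw [NNReal.smul_def, smul_eq_mul, Real.coe_toNNReal _ h]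
  -- Integrability of Z and Z * X under Qt
  have hZintQt : Integrable Z Qt := by
    refine ⟨hZmT.aestronglyMeasurable, ?_⟩
    rw [hasFiniteIntegral_iff_norm]
    have h1 : ∫⁻ ω, ENNReal.ofReal ‖Z ω‖ ∂Qt = ∫⁻ ω, ENNReal.ofReal (Z ω) ∂Qt :=
      lintegral_congr_ae (by filter_upwards [hZ0Qt] with ω h; rw [Real.norm_of_nonneg h])
    have h2 : ∫⁻ ω, ENNReal.ofReal (Z ω) ∂Qt = Q Set.univ := by
      have h := hmain 1 zero_le_one Set.univ MeasurableSet.univ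
      simpa using h
    rw [h1, h2]
    exact measure_lt_top _ _
  have hZXint : Integrable (Z * X) Qt := by
    refine Integrable.mono' (hZintQt.abs.const_mul (max Cb 0))
      ((hZmT.mul hX).aestronglyMeasurable)
      (Filter.Eventually.of_forall fun ω => ?_)
    rw [Pi.mul_apply, Real.norm_eq_abs, abs_mul, mul_comm (max Cb 0) |Z ω|]
    exact mul_le_mul_of_nonneg_left ((hCb ω).trans (le_max_left _ _)) (abs_nonneg _)
  -- Step B : ∫ Y dQ = ∫ X dQ
  have hBchain : ∫ ω, Y ω ∂Q = ∫ ω, X ω ∂Q := by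
    rw [hsmul Y]
    have h4 : Qt[Z * X|m0] =ᵐ[Qt] Z * Qt[X|m0] :=
      condExp_mul_of_stronglyMeasurable_left hZsm hZXint hXint
    have e1 : ∫ ω, Z ω * Y ω ∂Qt = ∫ ω, (Qt[Z * X|m0]) ω ∂Qt := by
      refine integral_congr_ae ?_
      filter_upwards [h4] with ω h
      rw [h, Pi.mul_apply]
    rw [e1, integral_condExp hm0]
    have e2 : ∫ ω, (Z * X) ω ∂Qt = ∫ ω, Z ω * X ω ∂Qt := by
      simp only [Pi.mul_apply]
    rw [e2, ← hsmul X]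
  -- conclusion
  rw [hD]
  have e3 : ∫ ω, (fun ω => a * Z ω) ω * Y ω ∂P = a * ∫ ω, Z ω * Y ω ∂P := by
    rw [← integral_const_mul a]
    refine integral_congr_ae (Filter.Eventually.of_forall fun ω => ?_)
    ring
  rw [e3, hA, hBchain]
end

section
/- In the setting of the decomposition μ = D_t·Q̃ with D_t = a·E_P[dQ/dP | F_t], suppose ρ_t : L^∞(F_T) → L^∞(F_t) is cash-subadditive and regular (ρ_t(X 1_A + Y 1_{A^c}) = 1_A ρ_t(X) + 1_{A^c} ρ_t(Y) for A ∈ F_t), and define ρ_{0,t}(X) = E_P[ρ_t(X)] and the penalty c̄_{0,t}(μ) = sup_{X ∈ L^∞} { E_μ[−X] − ρ_{0,t}(X) }. If P(D_t > 1) > 0, then c̄_{0,t}(μ) = +∞. -/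
open MeasureTheory
open scoped ENNReal

/-- In the decomposition `μ = D_t·Q̃` with `D_t = a·E_P[dQ/dP|F_t]`: if `ρ_t` is a
cash-subadditive, normalized, regular conditional risk measure,
`ρ_{0,t}(X) = E_P[ρ_t(X)]` and
`c̄_{0,t}(μ) = sup_{X ∈ L^∞} { E_μ[−X] − ρ_{0,t}(X) }` with `μ = a·Q`,
then `P(D_t > 1) > 0` implies `c̄_{0,t}(μ) = +∞`. -/
theorem stmt8 {Ω : Type*} {m0 mT : MeasurableSpace Ω} (hm0 : m0 ≤ mT)
    (P Q : @Measure Ω mT) [IsProbabilityMeasure P] [IsProbabilityMeasure Q]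
    (hQP : Q ≪ P)
    (a : ℝ) (ha : a ∈ Set.Icc (0:ℝ) 1)
    (D : Ω → ℝ) (hD : D = fun ω => a * (P[fun ω' => (Q.rnDeriv P ω').toReal|m0]) ω)
    (ρt : (Ω → ℝ) → Ω → ℝ)
    -- ρ_t maps L^∞(F_T) into L^∞(F_t)
    (hmeas : ∀ X : Ω → ℝ, Measurable[mT] X → (∃ C, ∀ ω, |X ω| ≤ C) →
      Measurable[m0] (ρt X) ∧ ∃ C, ∀ ω, |ρt X ω| ≤ C)
    -- normalization
    (hnorm : ∀ᵐ ω ∂P, ρt 0 ω = 0)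
    -- conditional cash-subadditivity
    (hcsa : ∀ X : Ω → ℝ, Measurable[mT] X → (∃ C, ∀ ω, |X ω| ≤ C) →
      ∀ m : Ω → ℝ, Measurable[m0] m → (∃ C, ∀ ω, |m ω| ≤ C) → (∀ ω, 0 ≤ m ω) →
      ∀ᵐ ω ∂P, ρt X ω - m ω ≤ ρt (fun ω' => X ω' + m ω') ω)
    -- regularity
    (hreg : ∀ X Y : Ω → ℝ, Measurable[mT] X → Measurable[mT] Y →
      (∃ C, ∀ ω, |X ω| ≤ C) → (∃ C, ∀ ω, |Y ω| ≤ C) →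
      ∀ A : Set Ω, MeasurableSet[m0] A →
      ∀ᵐ ω ∂P, ρt (fun ω' => A.indicator X ω' + Aᶜ.indicator Y ω') ω =
        A.indicator (ρt X) ω + Aᶜ.indicator (ρt Y) ω)
    (hDgt : 0 < P {ω | 1 < D ω}) :
    (⨆ X : {X : Ω → ℝ // Measurable[mT] X ∧ ∃ C, ∀ ω, |X ω| ≤ C},
      ((a * ∫ ω, -(X.1 ω) ∂Q - ∫ ω, ρt X.1 ω ∂P : ℝ) : EReal)) = ⊤ := by
  rw [EReal.eq_top_iff_forall_lt]
  intro M
  set A : Set Ω := {ω | 1 < D ω} with hAdef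
  have hDmeas : Measurable[m0] D := by
    rw [hD]; exact stronglyMeasurable_condExp.measurable.const_mul a
  have hAmeas : MeasurableSet[m0] A := measurableSet_lt measurable_const hDmeas
  have hAmeasT : MeasurableSet[mT] A := hm0 _ hAmeas
  have hrnint : Integrable (fun ω' => (Q.rnDeriv P ω').toReal) P :=
    Measure.integrable_toReal_rnDeriv
  have hDint : Integrable D P := by
    rw [hD]; exact integrable_condExp.const_mul a
  -- key strict inequality: P(A) < a * Q(A)
  have hIA : ∫ ω in A, D ω ∂P = a * (Q A).toReal := by
    rw [hD, integral_const_mul, setIntegral_condExp hm0 hrnint hAmeas,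
      Measure.setIntegral_toReal_rnDeriv hQP A]; rfl
  have key : (P A).toReal < a * (Q A).toReal := by
    have hpos : 0 < ∫ ω, A.indicator (fun ω => D ω - 1) ω ∂P := by
      rw [integral_pos_iff_support_of_nonneg_ae]
      · refine hDgt.trans_le (measure_mono ?_)
        intro ω hω
        simp only [Function.mem_support, Set.indicator_apply_ne_zero]
        exact ⟨hω, by simpa [sub_eq_zero] using (ne_of_gt hω)⟩
      · refine Filter.Eventually.of_forall fun ω => Set.indicator_nonneg ?_ ω
        intro ω hω
        simpa using le_of_lt (hω : 1 < D ω)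
      · exact (hDint.sub (integrable_const 1)).indicator hAmeasT
    rw [integral_indicator hAmeasT,
      integral_sub hDint.integrableOn (integrable_const 1),
      setIntegral_const] at hpos
    have : (P A).toReal < ∫ ω in A, D ω ∂P := by
      have h := hpos
      simp only [smul_eq_mul, mul_one, measureReal_def] at h
      linarith
    rwa [hIA] at this
  set δ : ℝ := a * (Q A).toReal - (P A).toReal with hδdef
  have hδpos : 0 < δ := by simp [hδdef]; linarith
  set L : ℝ := max ((M + 1) / δ) 1 with hLdef
  have hL1 : (1:ℝ) ≤ L := le_max_right _ _
  have hLpos : 0 < L := lt_of_lt_of_le one_pos hL1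
  have hLδ : M < L * δ := by
    rcases le_or_gt 1 ((M + 1) / δ) with h | h
    · have : L = (M + 1) / δ := max_eq_left h
      rw [this, div_mul_cancel₀ _ (ne_of_gt hδpos)]; linarith
    · have hLe : L = 1 := max_eq_right h.le
      have := (div_lt_one hδpos).mp h
      rw [hLe, one_mul]; linarith
  -- the test random variable
  set X : Ω → ℝ := fun ω' => A.indicator (fun _ => -L) ω' + Aᶜ.indicator (0 : Ω → ℝ) ω'
    with hXdef
  have hXeq : ∀ ω, X ω = A.indicator (fun _ => -L) ω := by
    intro ω; simp [hXdef]
  have hXfun : X = A.indicator (fun _ => -L) := funext hXeq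
  have hXm : Measurable[mT] X := by
    rw [hXfun]; exact measurable_const.indicator hAmeasT
  have hXb : ∃ C, ∀ ω, |X ω| ≤ C := by
    refine ⟨L, fun ω => ?_⟩
    rw [hXeq ω]
    by_cases hω : ω ∈ A <;>
      simp [Set.indicator_of_mem, Set.indicator_of_notMem, hω, abs_of_pos hLpos,
        le_of_lt hLpos]
  -- cash subadditivity bound: ρt (-L) ≤ L a.e.
  have hcsaL := hcsa (fun _ => -L) measurable_const ⟨L, fun ω => by
      simp [abs_of_pos hLpos]⟩ (fun _ => L) measurable_const
      ⟨L, fun ω => by simp [abs_of_pos hLpos]⟩ (fun ω => hLpos.le)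
  have hzero : (fun ω' : Ω => -L + L) = (0 : Ω → ℝ) := by funext ω; simp
  rw [hzero] at hcsaL
  have hρL : ∀ᵐ ω ∂P, ρt (fun _ => -L) ω ≤ L := by
    filter_upwards [hcsaL, hnorm] with ω h1 h2
    rw [h2] at h1; linarith
  -- regularity
  have hr := hreg (fun _ => -L) (0 : Ω → ℝ) measurable_const measurable_const
    ⟨L, fun ω => by simp [abs_of_pos hLpos]⟩ ⟨0, fun ω => by simp⟩ A hAmeas
  -- bound on ρt X a.e.
  have hρX : ∀ᵐ ω ∂P, ρt X ω ≤ A.indicator (fun _ => L) ω := by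
    filter_upwards [hr, hρL, hnorm] with ω h1 h2 h3
    have : ρt X ω = A.indicator (ρt fun _ => -L) ω + Aᶜ.indicator (ρt 0) ω := h1
    rw [this]
    by_cases hω : ω ∈ A
    · simp [Set.indicator_of_mem hω, Set.indicator_of_notMem (by simpa using hω :
        ω ∉ Aᶜ), h2]
    · simp [Set.indicator_of_notMem hω, Set.indicator_of_mem
        (by simpa using hω : ω ∈ Aᶜ), h3]
  -- integrability of ρt X
  obtain ⟨hρmeas, C, hC⟩ := hmeas X hXm hXb
  have hρint : Integrable (ρt X) P := by
    refine (integrable_const C).mono'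
      ((hρmeas.mono hm0 le_rfl).aestronglyMeasurable) ?_
    exact Filter.Eventually.of_forall fun ω => by
      simpa [Real.norm_eq_abs] using hC ω
  -- the μ-integral
  have hInegX : ∫ ω, -(X ω) ∂Q = L * (Q A).toReal := by
    have : (fun ω => -(X ω)) = A.indicator (fun _ => L) := by
      funext ω; rw [hXeq ω]
      by_cases hω : ω ∈ A <;>
        simp [Set.indicator_of_mem, Set.indicator_of_notMem, hω]
    rw [this, integral_indicator_const (L : ℝ) hAmeasT, smul_eq_mul, mul_comm]; rfl
  -- bound on the ρ integral
  have hIρ : ∫ ω, ρt X ω ∂P ≤ L * (P A).toReal := by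
    have hind : Integrable (A.indicator (fun _ => L) : Ω → ℝ) P :=
      (integrable_const L).indicator hAmeasT
    have := integral_mono_ae hρint hind hρX
    rwa [integral_indicator_const (L : ℝ) hAmeasT, smul_eq_mul, mul_comm] at this
  -- conclude
  refine lt_of_lt_of_le ?_ (le_iSup (fun X : {X : Ω → ℝ // Measurable[mT] X ∧
    ∃ C, ∀ ω, |X ω| ≤ C} =>
      ((a * ∫ ω, -(X.1 ω) ∂Q - ∫ ω, ρt X.1 ω ∂P : ℝ) : EReal)) ⟨X, hXm, hXb⟩)
  have hval : M < a * ∫ ω, -(X ω) ∂Q - ∫ ω, ρt X ω ∂P := by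
    rw [hInegX]
    have : L * δ ≤ a * (L * (Q A).toReal) - L * (P A).toReal := by
      rw [hδdef]; ring_nf; nlinarith
    nlinarith [hIρ]
  exact_mod_cast hval
end

section
/- Let ρ_t : L^∞(F_T) → L^∞(F_t) be regular. Fix D ∈ D (an adapted [0,1]-valued process) and Q ∈ Q_t (a probability measure with Q ≪ P and Q = P on F_t). Define the conditional minimal penalty c̄_t(DQ) = ess sup_{X ∈ L^∞} { D_t E_Q[−X|F_t] − ρ_t(X) } and the static penalty c̄_{0,t}(DQ) = sup_{X ∈ L^∞} { E_P[D_t E_Q[−X|F_t]] − E_P[ρ_t(X)] }. Then E_P[c̄_t(DQ)] = c̄_{0,t}(DQ). -/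
open MeasureTheory
open scoped ENNReal
namespace Stmt10Aux
variable {Ω : Type*} {m0 mT : MeasurableSpace Ω}

noncomputable def H (m0 : MeasurableSpace Ω) {mT : MeasurableSpace Ω} (Q : Measure Ω)
    (D : Ω → ℝ) (ρt : (Ω → ℝ) → Ω → ℝ) (X : Ω → ℝ) : Ω → ℝ :=
  fun ω => D ω * (Q[fun ω' => -(X ω')|m0]) ω - ρt X ω

noncomputable def F (m0 : MeasurableSpace Ω) {mT : MeasurableSpace Ω} (Q : Measure Ω)
    (D : Ω → ℝ) (ρt : (Ω → ℝ) → Ω → ℝ) (X : Ω → ℝ) : Ω → ℝ≥0∞ :=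
  fun ω => ENNReal.ofReal (H m0 Q D ρt X ω)

theorem ofReal_max_zero (a : ℝ) : ENNReal.ofReal (max a 0) = ENNReal.ofReal a := by
  rcases le_total a 0 with h | h
  · rw [max_eq_right h, ENNReal.ofReal_zero, eq_comm, ENNReal.ofReal_eq_zero]; exact h
  · rw [max_eq_left h]

theorem ofReal_max (a b : ℝ) :
    ENNReal.ofReal (max a b) = max (ENNReal.ofReal a) (ENNReal.ofReal b) :=
  Monotone.map_max (fun _ _ h => ENNReal.ofReal_le_ofReal h)

theorem int_bdd {P : Measure Ω} [IsFiniteMeasure P] {f : Ω → ℝ}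
    (hf : Measurable f) (hb : ∃ C, ∀ ω, |f ω| ≤ C) : Integrable f P := by
  obtain ⟨C, hC⟩ := hb
  exact ⟨hf.aestronglyMeasurable,
    HasFiniteIntegral.of_bounded (C := C) (Filter.Eventually.of_forall fun ω => by
      simpa [Real.norm_eq_abs] using hC ω)⟩

theorem int_condexp_P (hm0 : m0 ≤ mT) {P Q : @Measure Ω mT}
    (hQt : ∀ B : Set Ω, MeasurableSet[m0] B → Q B = P B)
    {φ : Ω → ℝ} (hint : Integrable φ Q) (hsm : StronglyMeasurable[m0] φ) :
    Integrable φ P := by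
  have htrim : Q.trim hm0 = P.trim hm0 := by
    refine @Measure.ext Ω m0 _ _ fun s hs => ?_
    rw [trim_measurableSet_eq hm0 hs, trim_measurableSet_eq hm0 hs, hQt s hs]
  have h2 := hint.trim hm0 hsm
  rw [htrim] at h2
  exact integrable_of_integrable_trim hm0 h2

theorem DQint (hm0 : m0 ≤ mT) {P Q : @Measure Ω mT} [IsProbabilityMeasure Q]
    (hQt : ∀ B : Set Ω, MeasurableSet[m0] B → Q B = P B)
    {D : Ω → ℝ} (hDmeas : Measurable[m0] D) (hDval : ∀ ω, D ω ∈ Set.Icc (0:ℝ) 1)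
    (X : Ω → ℝ) :
    Integrable (fun ω => D ω * (Q[fun ω' => -(X ω')|m0]) ω) P := by
  have hg : Integrable (Q[fun ω' => -(X ω')|m0]) P :=
    int_condexp_P hm0 hQt integrable_condExp stronglyMeasurable_condExp
  refine hg.bdd_mul ((hDmeas.mono hm0 le_rfl).aestronglyMeasurable) (c := 1) (Filter.Eventually.of_forall fun ω => ?_)
  rw [Real.norm_eq_abs, abs_le]
  exact ⟨by linarith [(hDval ω).1], (hDval ω).2⟩

theorem aeP_of_aeQ {P Q : @Measure Ω mT}
    (hQt : ∀ B : Set Ω, MeasurableSet[m0] B → Q B = P B)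
    {u v : Ω → ℝ} (hu : Measurable[m0] u) (hv : Measurable[m0] v)
    (h : u =ᵐ[Q] v) : u =ᵐ[P] v := by
  have hs : MeasurableSet[m0] {ω | u ω = v ω} := measurableSet_eq_fun hu hv
  rw [Filter.EventuallyEq, ae_iff] at h ⊢
  have hsc : MeasurableSet[m0] {ω | ¬ u ω = v ω} := hs.compl
  rw [← hQt _ hsc]
  exact h

theorem Hmeas0 (hm0 : m0 ≤ mT) (Q : @Measure Ω mT) {D : Ω → ℝ} (hDmeas : Measurable[m0] D)
    {ρt : (Ω → ℝ) → Ω → ℝ}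
    (hmeas : ∀ X : Ω → ℝ, Measurable[mT] X → (∃ C, ∀ ω, |X ω| ≤ C) →
      Measurable[m0] (ρt X) ∧ ∃ C, ∀ ω, |ρt X ω| ≤ C)
    {X : Ω → ℝ} (hXm : Measurable[mT] X) (hXb : ∃ C, ∀ ω, |X ω| ≤ C) :
    Measurable[m0] (H m0 Q D ρt X) :=
  (hDmeas.mul (stronglyMeasurable_condExp (m := m0)).measurable).sub (hmeas X hXm hXb).1

theorem combine (hm0 : m0 ≤ mT) {P Q : @Measure Ω mT}
    [IsProbabilityMeasure P] [IsProbabilityMeasure Q]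
    (hQt : ∀ B : Set Ω, MeasurableSet[m0] B → Q B = P B)
    {D : Ω → ℝ} (hDmeas : Measurable[m0] D)
    {ρt : (Ω → ℝ) → Ω → ℝ}
    (hmeas : ∀ X : Ω → ℝ, Measurable[mT] X → (∃ C, ∀ ω, |X ω| ≤ C) →
      Measurable[m0] (ρt X) ∧ ∃ C, ∀ ω, |ρt X ω| ≤ C)
    (hreg : ∀ X Y : Ω → ℝ, Measurable[mT] X → Measurable[mT] Y →
      (∃ C, ∀ ω, |X ω| ≤ C) → (∃ C, ∀ ω, |Y ω| ≤ C) →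
      ∀ A : Set Ω, MeasurableSet[m0] A →
      ∀ᵐ ω ∂P, ρt (fun ω' => A.indicator X ω' + Aᶜ.indicator Y ω') ω =
        A.indicator (ρt X) ω + Aᶜ.indicator (ρt Y) ω)
    {X Y : Ω → ℝ} (hXm : Measurable[mT] X) (hYm : Measurable[mT] Y)
    (hXb : ∃ C, ∀ ω, |X ω| ≤ C) (hYb : ∃ C, ∀ ω, |Y ω| ≤ C) :
    ∃ Z : Ω → ℝ, Measurable[mT] Z ∧ (∃ C, ∀ ω, |Z ω| ≤ C) ∧
      H m0 Q D ρt Z =ᵐ[P] fun ω => max (H m0 Q D ρt X ω) (H m0 Q D ρt Y ω) := by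
  classical
  set gX := Q[fun ω' => -(X ω')|m0] with hgX
  set gY := Q[fun ω' => -(Y ω')|m0] with hgY
  have hgXm : Measurable[m0] gX := (stronglyMeasurable_condExp (m := m0)).measurable
  have hgYm : Measurable[m0] gY := (stronglyMeasurable_condExp (m := m0)).measurable
  have hHXm : Measurable[m0] (H m0 Q D ρt X) := Hmeas0 hm0 Q hDmeas hmeas hXm hXb
  have hHYm : Measurable[m0] (H m0 Q D ρt Y) := Hmeas0 hm0 Q hDmeas hmeas hYm hYb
  set A : Set Ω := {ω | H m0 Q D ρt Y ω ≤ H m0 Q D ρt X ω} with hA_def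
  have hA : MeasurableSet[m0] A := measurableSet_le hHYm hHXm
  refine ⟨fun ω' => A.indicator X ω' + Aᶜ.indicator Y ω',
    (hXm.indicator (hm0 _ hA)).add (hYm.indicator (hm0 _ hA.compl)), ?_, ?_⟩
  · obtain ⟨CX, hCX⟩ := hXb; obtain ⟨CY, hCY⟩ := hYb
    refine ⟨max CX CY, fun ω => ?_⟩
    by_cases hω : ω ∈ A
    · simp only [Set.indicator_of_mem hω, Set.indicator_of_notMem (by simpa using hω : ω ∉ Aᶜ),
        add_zero]
      exact (hCX ω).trans (le_max_left _ _)
    · simp only [Set.indicator_of_notMem hω, Set.indicator_of_mem (by simpa using hω : ω ∈ Aᶜ),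
        zero_add]
      exact (hCY ω).trans (le_max_right _ _)
  · -- main a.e. identity
    have hρ := hreg X Y hXm hYm hXb hYb A hA
    -- rewrite the function inside the conditional expectation
    have hZfun : (fun ω' => -((fun ω'' => A.indicator X ω'' + Aᶜ.indicator Y ω'') ω'))
        = fun ω' => A.indicator (fun ω => -(X ω)) ω' + Aᶜ.indicator (fun ω => -(Y ω)) ω' := by
      funext ω
      by_cases hω : ω ∈ A
      · simp [Set.indicator_of_mem hω, Set.indicator_of_notMem (by simpa using hω : ω ∉ Aᶜ)]
      · simp [Set.indicator_of_notMem hω, Set.indicator_of_mem (by simpa using hω : ω ∈ Aᶜ)]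
    have hiX : Integrable (fun ω => -(X ω)) Q := (int_bdd hXm hXb).neg
    have hiY : Integrable (fun ω => -(Y ω)) Q := (int_bdd hYm hYb).neg
    have h1 : Integrable (A.indicator fun ω => -(X ω)) Q := hiX.indicator (hm0 _ hA)
    have h2 : Integrable (Aᶜ.indicator fun ω => -(Y ω)) Q := hiY.indicator (hm0 _ hA.compl)
    have hadd : Q[(fun ω' => A.indicator (fun ω => -(X ω)) ω' + Aᶜ.indicator (fun ω => -(Y ω)) ω')|m0]
        =ᵐ[Q] fun ω => (Q[A.indicator fun ω => -(X ω)|m0]) ω + (Q[Aᶜ.indicator fun ω => -(Y ω)|m0]) ω :=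
      condExp_add h1 h2 m0
    have hcX : Q[A.indicator fun ω => -(X ω)|m0] =ᵐ[Q] A.indicator gX :=
      condExp_indicator hiX hA
    have hcY : Q[Aᶜ.indicator fun ω => -(Y ω)|m0] =ᵐ[Q] Aᶜ.indicator gY :=
      condExp_indicator hiY hA.compl
    have hcondQ : Q[(fun ω' => -((fun ω'' => A.indicator X ω'' + Aᶜ.indicator Y ω'') ω'))|m0]
        =ᵐ[Q] fun ω => A.indicator gX ω + Aᶜ.indicator gY ω := by
      rw [hZfun]
      filter_upwards [hadd, hcX, hcY] with ω h1' h2' h3'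
      rw [h1', h2', h3']
    have hcondP : Q[(fun ω' => -((fun ω'' => A.indicator X ω'' + Aᶜ.indicator Y ω'') ω'))|m0]
        =ᵐ[P] fun ω => A.indicator gX ω + Aᶜ.indicator gY ω := by
      refine aeP_of_aeQ hQt (stronglyMeasurable_condExp (m := m0)).measurable
        ((hgXm.indicator hA).add (hgYm.indicator hA.compl)) hcondQ
    filter_upwards [hρ, hcondP] with ω hρω hcω
    show D ω * _ - _ = _
    rw [hcω, hρω]
    by_cases hω : ω ∈ A
    · have hle : H m0 Q D ρt Y ω ≤ H m0 Q D ρt X ω := hω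
      simp only [Set.indicator_of_mem hω, Set.indicator_of_notMem (by simpa using hω : ω ∉ Aᶜ),
        add_zero, max_eq_left hle]
      rfl
    · have hle : H m0 Q D ρt X ω ≤ H m0 Q D ρt Y ω :=
        le_of_not_ge (by simpa [hA_def] using hω)
      simp only [Set.indicator_of_notMem hω, Set.indicator_of_mem (by simpa using hω : ω ∈ Aᶜ),
        zero_add, max_eq_right hle]
      rfl


end Stmt10Aux

open Stmt10Aux in
/-- For a regular, normalized conditional risk measure `ρ_t`, `D ∈ 𝒟` and
`Q ∈ 𝒬_t`, the expectation under `P` of the conditional minimal penalty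
`c̄_t(DQ) = ess sup_{X ∈ L^∞} { D_t E_Q[−X|F_t] − ρ_t(X) }` equals the static
minimal penalty `c̄_{0,t}(DQ) = sup_{X ∈ L^∞} { E_P[D_t E_Q[−X|F_t]] − E_P[ρ_t(X)] }`.
Here `c̄_t(DQ)` (which is nonnegative, since `ρ_t` is normalized) is
characterized as the `[0,∞]`-valued a.e.-least upper bound of the family, and
both penalties take values in `[0,∞]`. -/
theorem stmt10 {Ω : Type*} {m0 mT : MeasurableSpace Ω} (hm0 : m0 ≤ mT)
    (P Q : @Measure Ω mT) [IsProbabilityMeasure P] [IsProbabilityMeasure Q]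
    (hQP : Q ≪ P) (hQt : ∀ B : Set Ω, MeasurableSet[m0] B → Q B = P B)
    (D : Ω → ℝ) (hDmeas : Measurable[m0] D) (hDval : ∀ ω, D ω ∈ Set.Icc (0:ℝ) 1)
    (ρt : (Ω → ℝ) → Ω → ℝ)
    (hmeas : ∀ X : Ω → ℝ, Measurable[mT] X → (∃ C, ∀ ω, |X ω| ≤ C) →
      Measurable[m0] (ρt X) ∧ ∃ C, ∀ ω, |ρt X ω| ≤ C)
    (hnorm : ∀ᵐ ω ∂P, ρt 0 ω = 0)
    (hreg : ∀ X Y : Ω → ℝ, Measurable[mT] X → Measurable[mT] Y →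
      (∃ C, ∀ ω, |X ω| ≤ C) → (∃ C, ∀ ω, |Y ω| ≤ C) →
      ∀ A : Set Ω, MeasurableSet[m0] A →
      ∀ᵐ ω ∂P, ρt (fun ω' => A.indicator X ω' + Aᶜ.indicator Y ω') ω =
        A.indicator (ρt X) ω + Aᶜ.indicator (ρt Y) ω)
    (ct : Ω → ℝ≥0∞)
    -- `ct` is an a.e. upper bound of the family ...
    (hub : ∀ X : Ω → ℝ, Measurable[mT] X → (∃ C, ∀ ω, |X ω| ≤ C) →
      ∀ᵐ ω ∂P, ENNReal.ofReal (D ω * (Q[fun ω' => -X ω'|m0]) ω - ρt X ω) ≤ ct ω)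
    -- ... and a.e. below any other upper bound (i.e. an essential supremum)
    (hlub : ∀ g : Ω → ℝ≥0∞,
      (∀ X : Ω → ℝ, Measurable[mT] X → (∃ C, ∀ ω, |X ω| ≤ C) →
        ∀ᵐ ω ∂P, ENNReal.ofReal (D ω * (Q[fun ω' => -X ω'|m0]) ω - ρt X ω) ≤ g ω) →
      ∀ᵐ ω ∂P, ct ω ≤ g ω) :
    ∫⁻ ω, ct ω ∂P =
      ⨆ X : {X : Ω → ℝ // Measurable[mT] X ∧ ∃ C, ∀ ω, |X ω| ≤ C},
        ENNReal.ofReal (∫ ω, D ω * (Q[fun ω' => -(X.1 ω')|m0]) ω ∂P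
          - ∫ ω, ρt X.1 ω ∂P) := by
  classical
  -- Basic integrability and measurability facts
  have hρint : ∀ X : Ω → ℝ, Measurable[mT] X → (∃ C, ∀ ω, |X ω| ≤ C) →
      Integrable (ρt X) P := fun X hXm hXb =>
    int_bdd ((hmeas X hXm hXb).1.mono hm0 le_rfl) (hmeas X hXm hXb).2
  have hHint : ∀ X : Ω → ℝ, Measurable[mT] X → (∃ C, ∀ ω, |X ω| ≤ C) →
      Integrable (H m0 Q D ρt X) P := fun X hXm hXb =>
    (DQint hm0 hQt hDmeas hDval X).sub (hρint X hXm hXb)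
  have hFmeas : ∀ X : Ω → ℝ, Measurable[mT] X → (∃ C, ∀ ω, |X ω| ≤ C) →
      Measurable[mT] (F m0 Q D ρt X) := fun X hXm hXb =>
    ENNReal.measurable_ofReal.comp ((Hmeas0 hm0 Q hDmeas hmeas hXm hXb).mono hm0 le_rfl)
  have hsub : ∀ X : Ω → ℝ, Measurable[mT] X → (∃ C, ∀ ω, |X ω| ≤ C) →
      ∫ ω, D ω * (Q[fun ω' => -(X ω')|m0]) ω ∂P - ∫ ω, ρt X ω ∂P
        = ∫ ω, H m0 Q D ρt X ω ∂P := fun X hXm hXb =>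
    (integral_sub (DQint hm0 hQt hDmeas hDval X) (hρint X hXm hXb)).symm
  have hb0 : ∃ C, ∀ ω : Ω, |(0 : Ω → ℝ) ω| ≤ C := ⟨0, by simp⟩
  have hH0 : H m0 Q D ρt 0 =ᵐ[P] 0 := by
    have harg : (fun ω' : Ω => -((0 : Ω → ℝ) ω')) = (0 : Ω → ℝ) := by funext ω; simp
    have hq : (Q[fun ω' => -((0 : Ω → ℝ) ω')|m0]) = 0 := by rw [harg]; exact condExp_zero
    filter_upwards [hnorm] with ω hω
    show D ω * (Q[fun ω' => -((0 : Ω → ℝ) ω')|m0]) ω - ρt 0 ω = (0 : Ω → ℝ) ω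
    rw [hq]
    simp [hω]
  -- The (to-be-proved-equal) common value
  set S : ℝ≥0∞ := ⨆ X : {X : Ω → ℝ // Measurable[mT] X ∧ ∃ C, ∀ ω, |X ω| ≤ C},
      ∫⁻ ω, F m0 Q D ρt X.1 ω ∂P with hS_def
  have hFleS : ∀ X : Ω → ℝ, ∀ hXm : Measurable[mT] X, ∀ hXb : (∃ C, ∀ ω, |X ω| ≤ C),
      ∫⁻ ω, F m0 Q D ρt X ω ∂P ≤ S := fun X hXm hXb =>
    le_iSup (fun X' : {X' : Ω → ℝ // Measurable[mT] X' ∧ ∃ C, ∀ ω, |X' ω| ≤ C} =>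
      ∫⁻ ω, F m0 Q D ρt X'.1 ω ∂P) ⟨X, hXm, hXb⟩
  -- Step 1 : the right-hand side equals S
  have hRHS : (⨆ X : {X : Ω → ℝ // Measurable[mT] X ∧ ∃ C, ∀ ω, |X ω| ≤ C},
      ENNReal.ofReal (∫ ω, D ω * (Q[fun ω' => -(X.1 ω')|m0]) ω ∂P
        - ∫ ω, ρt X.1 ω ∂P)) = S := by
    apply le_antisymm
    · refine iSup_le fun X => ?_
      obtain ⟨X, hXm, hXb⟩ := X
      refine le_trans ?_ (hFleS X hXm hXb)
      rw [hsub X hXm hXb]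
      calc ENNReal.ofReal (∫ ω, H m0 Q D ρt X ω ∂P)
          ≤ ENNReal.ofReal (∫ ω, max (H m0 Q D ρt X ω) 0 ∂P) :=
            ENNReal.ofReal_le_ofReal (integral_mono (hHint X hXm hXb)
              (hHint X hXm hXb).pos_part (fun ω => le_max_left _ _))
        _ = ∫⁻ ω, ENNReal.ofReal (max (H m0 Q D ρt X ω) 0) ∂P :=
            ofReal_integral_eq_lintegral_ofReal (hHint X hXm hXb).pos_part
              (Filter.Eventually.of_forall fun ω => le_max_right _ _)
        _ = ∫⁻ ω, F m0 Q D ρt X ω ∂P := by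
            simp only [F, ofReal_max_zero]
    · refine iSup_le fun X => ?_
      obtain ⟨X, hXm, hXb⟩ := X
      obtain ⟨Z, hZm, hZb, hZeq⟩ := combine hm0 hQt hDmeas hmeas hreg hXm
        (measurable_zero : Measurable[mT] (0 : Ω → ℝ)) hXb hb0
      have hZeq' : H m0 Q D ρt Z =ᵐ[P] fun ω => max (H m0 Q D ρt X ω) 0 := by
        filter_upwards [hZeq, hH0] with ω h1 h2
        rw [h1, h2]; simp
      have hZnn : 0 ≤ᵐ[P] H m0 Q D ρt Z := by
        filter_upwards [hZeq'] with ω h1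
        rw [h1]; exact le_max_right _ _
      have : ∫⁻ ω, F m0 Q D ρt X ω ∂P
          = ENNReal.ofReal (∫ ω, D ω * (Q[fun ω' => -(Z ω')|m0]) ω ∂P
              - ∫ ω, ρt Z ω ∂P) := by
        rw [hsub Z hZm hZb]
        calc ∫⁻ ω, F m0 Q D ρt X ω ∂P
            = ∫⁻ ω, ENNReal.ofReal (max (H m0 Q D ρt X ω) 0) ∂P := by
              simp only [F, ofReal_max_zero]
          _ = ∫⁻ ω, ENNReal.ofReal (H m0 Q D ρt Z ω) ∂P := by
              refine lintegral_congr_ae ?_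
              filter_upwards [hZeq'] with ω h1
              rw [h1]
          _ = ENNReal.ofReal (∫ ω, H m0 Q D ρt Z ω ∂P) :=
              (ofReal_integral_eq_lintegral_ofReal (hHint Z hZm hZb) hZnn).symm
      rw [this]
      exact le_iSup_of_le ⟨Z, hZm, hZb⟩ le_rfl
  rw [hRHS]
  -- Step 2 : the left-hand side equals S
  have hge : S ≤ ∫⁻ ω, ct ω ∂P := by
    refine iSup_le fun X => ?_
    obtain ⟨X, hXm, hXb⟩ := X
    exact lintegral_mono_ae (hub X hXm hXb)
  by_cases hS0 : S = 0
  · refine le_antisymm ?_ (hS0 ▸ hge)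
    rw [hS0]
    have hctle := hlub (fun _ => 0) ?_
    · have : ∫⁻ ω, ct ω ∂P ≤ ∫⁻ (_ : Ω), 0 ∂P := lintegral_mono_ae hctle
      simpa using this
    · intro X hXm hXb
      have h0 : ∫⁻ ω, F m0 Q D ρt X ω ∂P = 0 :=
        le_antisymm (hS0 ▸ hFleS X hXm hXb) zero_le
      have := (lintegral_eq_zero_iff (hFmeas X hXm hXb)).mp h0
      filter_upwards [this] with ω hω
      exact le_of_eq hω
  by_cases hStop : S = ⊤
  · exact le_antisymm (hStop ▸ le_top) hge
  -- main case : 0 < S < ∞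
  have hseq : ∀ n : ℕ, ∃ X : {X : Ω → ℝ // Measurable[mT] X ∧ ∃ C, ∀ ω, |X ω| ≤ C},
      S - ((n : ℝ≥0∞) + 1)⁻¹ < ∫⁻ ω, F m0 Q D ρt X.1 ω ∂P := by
    intro n
    have : S - ((n : ℝ≥0∞) + 1)⁻¹ < S :=
      ENNReal.sub_lt_self hStop hS0 (by simp)
    exact lt_iSup_iff.mp this
  choose Xs hXs using hseq
  have hcomb : ∀ W V : {X : Ω → ℝ // Measurable[mT] X ∧ ∃ C, ∀ ω, |X ω| ≤ C},
      ∃ Z : {X : Ω → ℝ // Measurable[mT] X ∧ ∃ C, ∀ ω, |X ω| ≤ C},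
        H m0 Q D ρt Z.1 =ᵐ[P] fun ω => max (H m0 Q D ρt W.1 ω) (H m0 Q D ρt V.1 ω) := by
    intro W V
    obtain ⟨Z, hZm, hZb, hZeq⟩ := combine hm0 hQt hDmeas hmeas hreg W.2.1 V.2.1 W.2.2 V.2.2
    exact ⟨⟨Z, hZm, hZb⟩, hZeq⟩
  choose comb hcombspec using hcomb
  have hcombF : ∀ W V, F m0 Q D ρt (comb W V).1
      =ᵐ[P] fun ω => max (F m0 Q D ρt W.1 ω) (F m0 Q D ρt V.1 ω) := by
    intro W V
    filter_upwards [hcombspec W V] with ω hω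
    simp only [F, hω, ofReal_max]
  set Zs : ℕ → {X : Ω → ℝ // Measurable[mT] X ∧ ∃ C, ∀ ω, |X ω| ≤ C} :=
    fun n => Nat.rec (Xs 0) (fun n Zn => comb Zn (Xs (n + 1))) n with hZs_def
  have hZsS : ∀ n, Zs (n + 1) = comb (Zs n) (Xs (n + 1)) := fun n => rfl
  set G : Ω → ℝ≥0∞ := fun ω => ⨆ n, F m0 Q D ρt (Zs n).1 ω with hG_def
  have hmono : ∀ᵐ ω ∂P, Monotone fun n => F m0 Q D ρt (Zs n).1 ω := by
    have : ∀ n : ℕ, ∀ᵐ ω ∂P, F m0 Q D ρt (Zs n).1 ω ≤ F m0 Q D ρt (Zs (n + 1)).1 ω := by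
      intro n
      filter_upwards [hcombF (Zs n) (Xs (n + 1))] with ω hω
      rw [hZsS n, hω]
      exact le_max_left _ _
    filter_upwards [ae_all_iff.mpr this] with ω hω
    exact monotone_nat_of_le_succ hω
  have hGlint : ∫⁻ ω, G ω ∂P = ⨆ n, ∫⁻ ω, F m0 Q D ρt (Zs n).1 ω ∂P :=
    lintegral_iSup' (fun n => (hFmeas (Zs n).1 (Zs n).2.1 (Zs n).2.2).aemeasurable) hmono
  have hFge : ∀ n, ∫⁻ ω, F m0 Q D ρt (Xs n).1 ω ∂P ≤ ∫⁻ ω, F m0 Q D ρt (Zs n).1 ω ∂P := by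
    intro n
    cases n with
    | zero => exact le_rfl
    | succ n =>
      refine lintegral_mono_ae ?_
      filter_upwards [hcombF (Zs n) (Xs (n + 1))] with ω hω
      rw [hZsS n, hω]
      exact le_max_right _ _
  have hGeq : ∫⁻ ω, G ω ∂P = S := by
    rw [hGlint]
    apply le_antisymm
    · exact iSup_le fun n => hFleS (Zs n).1 (Zs n).2.1 (Zs n).2.2
    · refine ENNReal.le_of_forall_pos_le_add fun ε hε hlt => ?_
      obtain ⟨n, hn⟩ := ENNReal.exists_inv_nat_lt (a := (ε : ℝ≥0∞))
        (by exact_mod_cast hε.ne')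
      have h1 : S ≤ ∫⁻ ω, F m0 Q D ρt (Xs n).1 ω ∂P + ((n : ℝ≥0∞) + 1)⁻¹ := by
        refine le_trans (le_tsub_add (a := ((n : ℝ≥0∞) + 1)⁻¹) (b := S)) ?_
        gcongr
        exact (hXs n).le
      have h2 : ((n : ℝ≥0∞) + 1)⁻¹ ≤ (ε : ℝ≥0∞) := by
        refine le_trans ?_ hn.le
        exact ENNReal.inv_le_inv' (le_add_of_nonneg_right zero_le_one)
      calc S ≤ ∫⁻ ω, F m0 Q D ρt (Xs n).1 ω ∂P + ((n : ℝ≥0∞) + 1)⁻¹ := h1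
        _ ≤ (⨆ m, ∫⁻ ω, F m0 Q D ρt (Zs m).1 ω ∂P) + (ε : ℝ≥0∞) := by
            gcongr
            exact (hFge n).trans (le_iSup (fun m => ∫⁻ ω, F m0 Q D ρt (Zs m).1 ω ∂P) n)
  -- G is an a.e. upper bound for the whole family
  have hGub : ∀ X : Ω → ℝ, Measurable[mT] X → (∃ C, ∀ ω, |X ω| ≤ C) →
      ∀ᵐ ω ∂P, ENNReal.ofReal (D ω * (Q[fun ω' => -X ω'|m0]) ω - ρt X ω) ≤ G ω := by
    intro X hXm hXb
    set Xk : {X : Ω → ℝ // Measurable[mT] X ∧ ∃ C, ∀ ω, |X ω| ≤ C} := ⟨X, hXm, hXb⟩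
    -- the function max (F X) G
    set M : Ω → ℝ≥0∞ := fun ω => max (F m0 Q D ρt X ω) (G ω) with hM_def
    have hMmono : ∀ᵐ ω ∂P, Monotone fun n => max (F m0 Q D ρt X ω) (F m0 Q D ρt (Zs n).1 ω) := by
      filter_upwards [hmono] with ω hω
      exact fun a b hab => max_le_max le_rfl (hω hab)
    have hMlint : ∫⁻ ω, M ω ∂P
        = ⨆ n, ∫⁻ ω, max (F m0 Q D ρt X ω) (F m0 Q D ρt (Zs n).1 ω) ∂P := by
      have : ∫⁻ ω, M ω ∂P = ∫⁻ ω, ⨆ n, max (F m0 Q D ρt X ω) (F m0 Q D ρt (Zs n).1 ω) ∂P := by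
        refine lintegral_congr fun ω => ?_
        show (F m0 Q D ρt X ω) ⊔ (⨆ n, F m0 Q D ρt (Zs n).1 ω)
          = ⨆ n, (F m0 Q D ρt X ω) ⊔ (F m0 Q D ρt (Zs n).1 ω)
        exact sup_iSup
      rw [this]
      exact lintegral_iSup' (fun n => ((hFmeas X hXm hXb).sup
        (hFmeas (Zs n).1 (Zs n).2.1 (Zs n).2.2)).aemeasurable) hMmono
    have hMle : ∫⁻ ω, M ω ∂P ≤ S := by
      rw [hMlint]
      refine iSup_le fun n => ?_
      have : ∫⁻ ω, max (F m0 Q D ρt X ω) (F m0 Q D ρt (Zs n).1 ω) ∂P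
          = ∫⁻ ω, F m0 Q D ρt (comb Xk (Zs n)).1 ω ∂P := by
        refine lintegral_congr_ae ?_
        filter_upwards [hcombF Xk (Zs n)] with ω hω
        rw [hω]
      rw [this]
      exact hFleS _ (comb Xk (Zs n)).2.1 (comb Xk (Zs n)).2.2
    have hGM : G =ᵐ[P] M := by
      refine ae_eq_of_ae_le_of_lintegral_le ?_ ?_ ?_ ?_
      · exact Filter.Eventually.of_forall fun ω => le_max_right _ _
      · rw [hGeq]; exact hStop
      · exact ((hFmeas X hXm hXb).sup (Measurable.iSup fun n =>
          hFmeas (Zs n).1 (Zs n).2.1 (Zs n).2.2)).aemeasurable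
      · rw [hGeq]; exact hMle
    filter_upwards [hGM] with ω hω
    have : F m0 Q D ρt X ω ≤ M ω := le_max_left _ _
    rw [← hω] at this
    exact this
  have hle : ∫⁻ ω, ct ω ∂P ≤ S := by
    have hctG := hlub G hGub
    have : ∫⁻ ω, ct ω ∂P ≤ ∫⁻ ω, G ω ∂P := lintegral_mono_ae hctG
    rwa [hGeq] at this
  exact le_antisymm hle hge
end

section
/- Let (ρ_{t,T})_{t ∈ [0,T]} be a dynamic risk measure that is normalized (ρ_{t,T}(0) = 0) and cash-subadditive (ρ_{t,T}(X + m_t) ≥ ρ_{t,T}(X) − m_t for m_t ∈ L^∞₊(F_t)), and weakly time-consistent. Then for all 0 ≤ s ≤ t ≤ T and X ∈ L^∞(F_T): if ρ_{t,T}(X) ≤ 0 a.s. then ρ_{s,T}(X) ≤ ρ_{s,T}(−ρ_{t,T}(X)); and if ρ_{t,T}(X) ≥ 0 a.s. then ρ_{s,T}(X) ≥ ρ_{s,T}(−ρ_{t,T}(X)). -/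
open MeasureTheory

/-- A normalized, cash-subadditive, weakly time-consistent dynamic risk measure
satisfies: if `ρ_{t,T}(X) ≤ 0` a.s. then `ρ_{s,T}(X) ≤ ρ_{s,T}(-ρ_{t,T}(X))`,
and if `ρ_{t,T}(X) ≥ 0` a.s. then `ρ_{s,T}(X) ≥ ρ_{s,T}(-ρ_{t,T}(X))`,
for all `0 ≤ s ≤ t ≤ T`. -/
theorem stmt13 {Ω : Type*} {mΩ : MeasurableSpace Ω} (P : Measure Ω) [IsProbabilityMeasure P]
    (T : ℝ) (hT : 0 ≤ T)
    (F : ℝ → MeasurableSpace Ω) (hFmono : Monotone F) (hF : ∀ t, F t ≤ mΩ)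
    (ρ : ℝ → (Ω → ℝ) → Ω → ℝ)
    -- each ρ_{t,T} maps into L^∞(F_t)
    (hmeas : ∀ t, 0 ≤ t → t ≤ T → ∀ X : Ω → ℝ,
      Measurable[F t] (ρ t X) ∧ ∃ C, ∀ ω, |ρ t X ω| ≤ C)
    -- normalization
    (hnorm : ∀ t, 0 ≤ t → t ≤ T → ∀ᵐ ω ∂P, ρ t 0 ω = 0)
    -- cash-subadditivity w.r.t. nonnegative F_t-measurable bounded shifts
    (hcsa : ∀ t, 0 ≤ t → t ≤ T → ∀ X : Ω → ℝ, ∀ m : Ω → ℝ, Measurable[F t] m →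
      (∃ C, ∀ ω, |m ω| ≤ C) → (∀ ω, 0 ≤ m ω) →
      ∀ᵐ ω ∂P, ρ t X ω - m ω ≤ ρ t (fun ω' => X ω' + m ω') ω)
    -- weak time-consistency
    (hwtc : ∀ s t, 0 ≤ s → s ≤ t → t ≤ T → ∀ X Y : Ω → ℝ,
      (∀ᵐ ω ∂P, ρ t Y ω ≤ ρ t X ω) → ∀ᵐ ω ∂P, ρ s Y ω ≤ ρ s X ω) :
    ∀ s t, 0 ≤ s → s ≤ t → t ≤ T → ∀ X : Ω → ℝ,
      ((∀ ω, ρ t X ω ≤ 0) → ∀ᵐ ω ∂P, ρ s X ω ≤ ρ s (fun ω' => -(ρ t X ω')) ω) ∧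
      ((∀ ω, 0 ≤ ρ t X ω) → ∀ᵐ ω ∂P, ρ s (fun ω' => -(ρ t X ω')) ω ≤ ρ s X ω) := by

  intro s t hs hst htT X
  have hst0 : (0:ℝ) ≤ t := le_trans hs hst
  obtain ⟨hXm, C, hXb⟩ := hmeas t hst0 htT X
  constructor
  · intro hle
    -- m = -ρ t X ≥ 0
    have hm : Measurable[F t] (fun ω => -(ρ t X ω)) := hXm.neg
    have hb : ∃ C, ∀ ω, |(fun ω => -(ρ t X ω)) ω| ≤ C := ⟨C, fun ω => by simpa using hXb ω⟩
    have hpos : ∀ ω, 0 ≤ (fun ω => -(ρ t X ω)) ω := fun ω => by simpa using hle ω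
    have h1 := hcsa t hst0 htT 0 (fun ω => -(ρ t X ω)) hm hb hpos
    have h2 := hnorm t hst0 htT
    have h3 : ∀ᵐ ω ∂P, ρ t X ω ≤ ρ t (fun ω' => -(ρ t X ω')) ω := by
      filter_upwards [h1, h2] with ω h1 h2
      have : ρ t (fun ω' => (0:Ω → ℝ) ω' + -(ρ t X ω')) ω
          = ρ t (fun ω' => -(ρ t X ω')) ω := by
        congr 1; funext ω'; simp
      rw [this] at h1
      linarith
    exact hwtc s t hs hst htT (fun ω' => -(ρ t X ω')) X h3
  · intro hge
    have hb : ∃ C, ∀ ω, |ρ t X ω| ≤ C := ⟨C, hXb⟩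
    have h1 := hcsa t hst0 htT (fun ω' => -(ρ t X ω')) (ρ t X) hXm hb hge
    have h2 := hnorm t hst0 htT
    have h3 : ∀ᵐ ω ∂P, ρ t (fun ω' => -(ρ t X ω')) ω ≤ ρ t X ω := by
      filter_upwards [h1, h2] with ω h1 h2
      have : ρ t (fun ω' => -(ρ t X ω') + ρ t X ω') ω = ρ t 0 ω := by
        congr 1; funext ω'; simp
      rw [this, h2] at h1
      linarith
    exact hwtc s t hs hst htT X (fun ω' => -(ρ t X ω')) h3
end

section
/- Let D¹, D² be adapted [0,1]-valued processes, Q₁, Q₂ probability measures, and suppose: (a) bifurcation stability—for any A ∈ F_s there exist D* and Q* with D*_{s,t} = 1_A D¹_{s,t} + 1_{A^c} D²_{s,t} and E_{Q*}[X|F_s] = 1_A E_{Q₁}[X|F_s] + 1_{A^c} E_{Q₂}[X|F_s] for all X ∈ L^∞(F_t); (b) generalized locality of the penalty c_{s,t}. Then for any fixed X ∈ L^∞(F_t), the set { D_{s,t} E_Q[−X|F_s] − c_{s,t}(DQ) : (D,Q) ∈ D × Q } contains an element equal a.s. to max_{i=1,2} { Dⁱ_{s,t} E_{Q_i}[−X|F_s]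 − c_{s,t}(Dⁱ Q_i) }; in particular this set is upward directed. -/
open MeasureTheory

lemma meas_sub_aux {α} [MeasurableSpace α] {r : α → ℝ} {g : α → EReal}
    (hr : Measurable r) (hg : Measurable g) :
    Measurable (fun x => ((r x : EReal) - g x)) := by
  have heq : (fun x => ((r x : EReal) - g x)) =
      fun x => if g x = ⊤ then (⊥ : EReal) else if g x = ⊥ then ⊤
        else ((r x - (g x).toReal : ℝ) : EReal) := by
    funext x
    induction g x with
    | bot => simp
    | coe y => simp
    | top => simp
  rw [heq]
  exact Measurable.ite (hg (measurableSet_singleton _)) measurable_const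
    (Measurable.ite (hg (measurableSet_singleton _)) measurable_const
      ((hr.sub hg.ereal_toReal).coe_real_ereal))

/-- Under bifurcation stability of `(𝒟, 𝒬)` and generalized locality of the
penalty `c_{s,t}`, for any fixed `X ∈ L^∞(F_t)` and `D¹, D² ∈ 𝒟`,
`Q₁, Q₂ ∈ 𝒬`, the family `{ D_{s,t} E_Q[−X|F_s] − c_{s,t}(DQ) : (D,Q) ∈ 𝒟 × 𝒬 }`
contains an element equal a.s. to
`max_i { Dⁱ_{s,t} E_{Q_i}[−X|F_s] − c_{s,t}(Dⁱ Q_i) }`; in particular it is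
upward directed. -/
theorem stmt19 {Ω : Type*} {ms mt mΩ : MeasurableSpace Ω}
    (hms : ms ≤ mt) (hmt : mt ≤ mΩ)
    (P : @Measure Ω mΩ) [IsProbabilityMeasure P]
    (Dset : Set (Ω → ℝ))
    (hDset : ∀ D ∈ Dset, Measurable[ms] D ∧ ∀ ω, D ω ∈ Set.Icc (0:ℝ) 1)
    (Qset : Set (@Measure Ω mΩ))
    (hQset : ∀ Q ∈ Qset, IsProbabilityMeasure Q ∧ Q ≪ P)
    (c : (Ω → ℝ) → @Measure Ω mΩ → Ω → EReal)
    (hc : ∀ D ∈ Dset, ∀ Q ∈ Qset, Measurable[ms] (c D Q))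
    (D1 D2 : Ω → ℝ) (hD1 : D1 ∈ Dset) (hD2 : D2 ∈ Dset)
    (Q1 Q2 : @Measure Ω mΩ) (hQ1 : Q1 ∈ Qset) (hQ2 : Q2 ∈ Qset)
    -- (a) bifurcation stability
    (hbif : ∀ A : Set Ω, MeasurableSet[ms] A →
      ∃ Dst ∈ Dset, ∃ Qst ∈ Qset,
        (∀ ω, Dst ω = A.indicator D1 ω + Aᶜ.indicator D2 ω) ∧
        (∀ X : Ω → ℝ, Measurable[mt] X → (∃ C, ∀ ω, |X ω| ≤ C) →
          ∀ᵐ ω ∂P, (Qst[X|ms]) ω =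
            A.indicator (Q1[X|ms]) ω + Aᶜ.indicator (Q2[X|ms]) ω))
    -- (b) generalized locality of the penalty
    (hlocal : ∀ D ∈ Dset, ∀ D' ∈ Dset, ∀ Q ∈ Qset, ∀ Q' ∈ Qset,
      ∀ A : Set Ω, MeasurableSet[ms] A →
      (∀ X : Ω → ℝ, Measurable[mt] X → (∃ C, ∀ ω, |X ω| ≤ C) →
        ∀ᵐ ω ∂P, ω ∈ A → (Q[X|ms]) ω = (Q'[X|ms]) ω) →
      (∀ ω ∈ A, D ω = D' ω) →
      ∀ᵐ ω ∂P, ω ∈ A → c D Q ω = c D' Q' ω)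
    (X : Ω → ℝ) (hX : Measurable[mt] X) (hXb : ∃ C, ∀ ω, |X ω| ≤ C) :
    ∃ Dst ∈ Dset, ∃ Qst ∈ Qset,
      ∀ᵐ ω ∂P,
        ((Dst ω * (Qst[fun ω' => -X ω'|ms]) ω : ℝ) : EReal) - c Dst Qst ω =
          max (((D1 ω * (Q1[fun ω' => -X ω'|ms]) ω : ℝ) : EReal) - c D1 Q1 ω)
              (((D2 ω * (Q2[fun ω' => -X ω'|ms]) ω : ℝ) : EReal) - c D2 Q2 ω) := by
  -- boundedness and measurability of -X
  have hXn : Measurable[mt] (fun ω' => -X ω') := hX.neg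
  have hXnb : ∃ C, ∀ ω, |(fun ω' => -X ω') ω| ≤ C := by
    obtain ⟨C, hC⟩ := hXb
    exact ⟨C, fun ω => by simpa [abs_neg] using hC ω⟩
  -- the two value functions
  set f1 : Ω → EReal := fun ω =>
    ((D1 ω * (Q1[fun ω' => -X ω'|ms]) ω : ℝ) : EReal) - c D1 Q1 ω with hf1
  set f2 : Ω → EReal := fun ω =>
    ((D2 ω * (Q2[fun ω' => -X ω'|ms]) ω : ℝ) : EReal) - c D2 Q2 ω with hf2
  have hm1 : Measurable[ms] f1 :=
    @meas_sub_aux Ω ms _ _ ((hDset D1 hD1).1.mul stronglyMeasurable_condExp.measurable)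
      (hc D1 hD1 Q1 hQ1)
  have hm2 : Measurable[ms] f2 :=
    @meas_sub_aux Ω ms _ _ ((hDset D2 hD2).1.mul stronglyMeasurable_condExp.measurable)
      (hc D2 hD2 Q2 hQ2)
  -- the pasting set
  set A : Set Ω := {ω | f2 ω ≤ f1 ω} with hAdef
  have hA : MeasurableSet[ms] A := by exact measurableSet_le hm2 hm1
  obtain ⟨Dst, hDst, Qst, hQst, hDeq, hQeq⟩ := hbif A hA
  refine ⟨Dst, hDst, Qst, hQst, ?_⟩
  -- conditional expectations agree on A and Aᶜ
  have hQcondA : ∀ Y : Ω → ℝ, Measurable[mt] Y → (∃ C, ∀ ω, |Y ω| ≤ C) →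
      ∀ᵐ ω ∂P, ω ∈ A → (Qst[Y|ms]) ω = (Q1[Y|ms]) ω := by
    intro Y hY hYb
    filter_upwards [hQeq Y hY hYb] with ω h hω
    rw [h, Set.indicator_of_mem hω, Set.indicator_of_notMem (by simpa using hω),
      add_zero]
  have hQcondAc : ∀ Y : Ω → ℝ, Measurable[mt] Y → (∃ C, ∀ ω, |Y ω| ≤ C) →
      ∀ᵐ ω ∂P, ω ∈ Aᶜ → (Qst[Y|ms]) ω = (Q2[Y|ms]) ω := by
    intro Y hY hYb
    filter_upwards [hQeq Y hY hYb] with ω h hω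
    rw [h, Set.indicator_of_notMem (by simpa using hω), Set.indicator_of_mem hω,
      zero_add]
  -- D agrees on A and Aᶜ
  have hDA : ∀ ω ∈ A, Dst ω = D1 ω := by
    intro ω hω
    rw [hDeq ω, Set.indicator_of_mem hω, Set.indicator_of_notMem (by simpa using hω),
      add_zero]
  have hDAc : ∀ ω ∈ Aᶜ, Dst ω = D2 ω := by
    intro ω hω
    rw [hDeq ω, Set.indicator_of_notMem (by simpa using hω), Set.indicator_of_mem hω,
      zero_add]
  -- penalties agree on A and Aᶜ by generalized locality
  have hcA := hlocal Dst hDst D1 hD1 Qst hQst Q1 hQ1 A hA hQcondA hDA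
  have hcAc := hlocal Dst hDst D2 hD2 Qst hQst Q2 hQ2 Aᶜ hA.compl hQcondAc hDAc
  filter_upwards [hQcondA _ hXn hXnb, hQcondAc _ hXn hXnb, hcA, hcAc]
    with ω hQ1ω hQ2ω hc1ω hc2ω
  by_cases hω : ω ∈ A
  · rw [hDA ω hω, hQ1ω hω, hc1ω hω]
    exact (max_eq_left hω).symm
  · have hω' : ω ∈ Aᶜ := hω
    rw [hDAc ω hω', hQ2ω hω', hc2ω hω']
    exact (max_eq_right (le_of_not_ge (fun h => hω h))).symm
end
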